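/- Let X ∈ ℝ^{n×p} with rows x₁,…,xₙ ∈ ℝ^p, and let μ>0. Define S^{∖i} := ((1/n)XᵀX − (1/n)xᵢxᵢᵀ + μI_p)⁻¹ for each i. Then (1/n)·tr( ((1/n)XXᵀ + μI_n)⁻² ) = (1/n)·Σ_{i=1}^n ( 1 + (1/n)·xᵢᵀ( S^{∖i} − μ·(S^{∖i})² )xᵢ ) / ( μ + (μ/n)·xᵢᵀ S^{∖i} xᵢ )². -/

import Mathlib

open Matrix

section StmtAux

variable {n p : ℕ}

lemma dot_self_nonneg (v : Fin p → ℝ) : 0 ≤ v ⬝ᵥ v :=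
  Finset.sum_nonneg fun i _ => mul_self_nonneg _

lemma dot_self_pos {v : Fin p → ℝ} (hv : v ≠ 0) : 0 < v ⬝ᵥ v :=
  lt_of_le_of_ne (dot_self_nonneg v) fun h => hv (dotProduct_self_eq_zero.mp h.symm)

lemma herm_smul (c : ℝ) {M : Matrix (Fin p) (Fin p) ℝ} (h : M.IsHermitian) :
    (c • M).IsHermitian := by
  unfold Matrix.IsHermitian at *
  rw [conjTranspose_smul, h, star_trivial]

lemma sandwich_apply (X : Matrix (Fin n) (Fin p) ℝ) (N : Matrix (Fin p) (Fin p) ℝ) (i : Fin n) :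
    (X * N * Xᵀ) i i = X i ⬝ᵥ N.mulVec (X i) := by
  simp only [Matrix.mul_apply, Matrix.mulVec, dotProduct, transpose_apply,
    Finset.sum_mul, Finset.mul_sum]
  rw [Finset.sum_comm]
  exact Finset.sum_congr rfl fun j _ => Finset.sum_congr rfl fun k _ => by ring

lemma vmv_mulVec (x v : Fin p → ℝ) :
    (vecMulVec x x).mulVec v = (x ⬝ᵥ v) • x := by
  ext j
  simp only [Matrix.mulVec, vecMulVec_apply, dotProduct, Pi.smul_apply, smul_eq_mul,
    Finset.sum_mul, Finset.mul_sum]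
  exact Finset.sum_congr rfl fun k _ => by ring

lemma dot_tmul (Y : Matrix (Fin n) (Fin p) ℝ) (v : Fin p → ℝ) :
    v ⬝ᵥ (Yᵀ * Y).mulVec v = (Y.mulVec v) ⬝ᵥ (Y.mulVec v) := by
  rw [← Matrix.mulVec_mulVec, Matrix.dotProduct_mulVec, Matrix.vecMul_transpose]

lemma dot_vmv (x v : Fin p → ℝ) :
    v ⬝ᵥ (vecMulVec x x).mulVec v = (x ⬝ᵥ v) ^ 2 := by
  rw [vmv_mulVec, dotProduct_smul, smul_eq_mul, dotProduct_comm, sq]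

lemma aux_pd (μ : ℝ) (hμ : 0 < μ) (c : ℝ) (hc : 0 ≤ c)
    (Y : Matrix (Fin n) (Fin p) ℝ) :
    (c • (Yᵀ * Y) + μ • (1 : Matrix (Fin p) (Fin p) ℝ)).PosDef := by
  refine Matrix.PosDef.of_dotProduct_mulVec_pos ?_ ?_
  · exact (herm_smul c (by simpa using isHermitian_conjTranspose_mul_self Y)).add (herm_smul μ isHermitian_one)
  · intro v hv
    rw [star_trivial, add_mulVec, dotProduct_add, smul_mulVec, smul_mulVec,
      dotProduct_smul, dotProduct_smul, one_mulVec, smul_eq_mul, smul_eq_mul, dot_tmul]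
    have h1 : 0 ≤ c * ((Y.mulVec v) ⬝ᵥ (Y.mulVec v)) :=
      mul_nonneg hc (Finset.sum_nonneg fun i _ => mul_self_nonneg _)
    have h2 : 0 < μ * (v ⬝ᵥ v) := mul_pos hμ (dot_self_pos hv)
    linarith

lemma aux_pd2 (μ : ℝ) (hμ : 0 < μ) (hn : 0 < n) (X : Matrix (Fin n) (Fin p) ℝ) (i : Fin n) :
    (((1:ℝ)/n) • (Xᵀ * X) - ((1:ℝ)/n) • Matrix.vecMulVec (X i) (X i)
      + μ • (1 : Matrix (Fin p) (Fin p) ℝ)).PosDef := by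
  have hc : (0:ℝ) ≤ 1/n := by positivity
  refine Matrix.PosDef.of_dotProduct_mulVec_pos ?_ ?_
  · refine Matrix.IsHermitian.add ?_ (herm_smul μ isHermitian_one)
    refine Matrix.IsHermitian.sub (herm_smul _ (by simpa using isHermitian_conjTranspose_mul_self X))
      (herm_smul _ ?_)
    unfold Matrix.IsHermitian
    ext j k
    simp [conjTranspose_apply, vecMulVec_apply, mul_comm]
  · intro v hv
    rw [star_trivial, add_mulVec, sub_mulVec, dotProduct_add, dotProduct_sub,
      smul_mulVec, smul_mulVec, smul_mulVec,
      dotProduct_smul, dotProduct_smul, dotProduct_smul, one_mulVec,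
      smul_eq_mul, smul_eq_mul, smul_eq_mul, dot_tmul, dot_vmv]
    have key : (X i ⬝ᵥ v) ^ 2 ≤ (X.mulVec v) ⬝ᵥ (X.mulVec v) := by
      have : X i ⬝ᵥ v = (X.mulVec v) i := rfl
      rw [this]
      have := Finset.single_le_sum (f := fun j => (X.mulVec v) j * (X.mulVec v) j)
        (fun j _ => mul_self_nonneg _) (Finset.mem_univ i)
      rw [sq]; exact this
    have h2 : 0 < μ * (v ⬝ᵥ v) := mul_pos hμ (dot_self_pos hv)
    nlinarith

end StmtAux

/-- Let `X ∈ ℝ^{n×p}` with rows `x₁,…,xₙ` and `μ > 0`. With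
`S⁽∖ⁱ⁾ = ((1/n)XᵀX − (1/n)xᵢxᵢᵀ + μI)⁻¹`, one has
`(1/n)·tr(((1/n)XXᵀ + μIₙ)⁻²)
  = (1/n)·Σᵢ (1 + (1/n)·xᵢᵀ(S⁽∖ⁱ⁾ − μ(S⁽∖ⁱ⁾)²)xᵢ) / (μ + (μ/n)·xᵢᵀS⁽∖ⁱ⁾xᵢ)²`. -/
theorem stmt13 (n p : ℕ) (hn : 0 < n) (μ : ℝ) (hμ : 0 < μ)
    (X : Matrix (Fin n) (Fin p) ℝ)
    (S : Fin n → Matrix (Fin p) (Fin p) ℝ)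
    (hS : ∀ i, S i = (((1:ℝ)/n) • (Xᵀ * X) - ((1:ℝ)/n) • Matrix.vecMulVec (X i) (X i)
      + μ • (1 : Matrix (Fin p) (Fin p) ℝ))⁻¹) :
    (1 / (n:ℝ)) * Matrix.trace (((((1:ℝ)/n) • (X * Xᵀ)
        + μ • (1 : Matrix (Fin n) (Fin n) ℝ))⁻¹) ^ 2) =
    (1 / (n:ℝ)) * ∑ i,
      (1 + (1 / (n:ℝ)) * (X i ⬝ᵥ (S i - μ • (S i) ^ 2).mulVec (X i))) /
        (μ + (μ / n) * (X i ⬝ᵥ (S i).mulVec (X i))) ^ 2 := by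
  have hN : ((n:ℝ)) ≠ 0 := Nat.cast_ne_zero.mpr hn.ne'
  have hμ' : μ ≠ 0 := hμ.ne'
  set B : Matrix (Fin p) (Fin p) ℝ := ((1:ℝ)/n) • (Xᵀ * X) + μ • 1 with hBdef
  set A : Matrix (Fin n) (Fin n) ℝ := ((1:ℝ)/n) • (X * Xᵀ) + μ • 1 with hAdef
  have hBpd : B.PosDef := aux_pd μ hμ _ (by positivity) X
  have hBdet : IsUnit B.det := (Matrix.isUnit_iff_isUnit_det _).mp hBpd.isUnit
  have hBB : B * B⁻¹ = 1 := Matrix.mul_nonsing_inv _ hBdet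
  have hBB' : B⁻¹ * B = 1 := Matrix.nonsing_inv_mul _ hBdet
  -- Woodbury
  have hXB : A * X = X * B := by
    rw [hAdef, hBdef]
    simp only [Matrix.add_mul, Matrix.mul_add, Matrix.smul_mul, Matrix.mul_smul,
      Matrix.one_mul, Matrix.mul_one, Matrix.mul_assoc]
  have hM : A * (X * B⁻¹ * Xᵀ) = X * Xᵀ := by
    calc A * (X * B⁻¹ * Xᵀ) = A * X * B⁻¹ * Xᵀ := by simp only [Matrix.mul_assoc]
    _ = X * B * B⁻¹ * Xᵀ := by rw [hXB]
    _ = X * Xᵀ := by rw [Matrix.mul_assoc X B B⁻¹, hBB, Matrix.mul_one]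
  have hAC : A * (μ⁻¹ • (1 - ((1:ℝ)/n) • (X * B⁻¹ * Xᵀ))) = 1 := by
    rw [mul_smul_comm, mul_sub, mul_one, mul_smul_comm, hM]
    have h2 : A - ((1:ℝ)/n) • (X * Xᵀ) = μ • 1 := by rw [hAdef]; abel
    rw [h2, smul_smul, inv_mul_cancel₀ hμ', one_smul]
  have hAinv : A⁻¹ = μ⁻¹ • (1 - ((1:ℝ)/n) • (X * B⁻¹ * Xᵀ)) := Matrix.inv_eq_right_inv hAC
  have hBsym : (B⁻¹)ᵀ = B⁻¹ := by
    rw [Matrix.transpose_nonsing_inv]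
    congr 1
    exact hBpd.isHermitian
  -- per-index identity
  have key : ∀ i, ((A⁻¹ * A⁻¹) i i) =
      (1 + (1 / (n:ℝ)) * (X i ⬝ᵥ (S i - μ • (S i) ^ 2).mulVec (X i))) /
        (μ + (μ / n) * (X i ⬝ᵥ (S i).mulVec (X i))) ^ 2 := by
    intro i
    have hSi := hS i
    set x := X i with hx
    set Bm : Matrix (Fin p) (Fin p) ℝ :=
      ((1:ℝ)/n) • (Xᵀ * X) - ((1:ℝ)/n) • Matrix.vecMulVec x x + μ • 1 with hBm
    have hBmpd : Bm.PosDef := aux_pd2 μ hμ hn X i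
    have hBmdet : IsUnit Bm.det := (Matrix.isUnit_iff_isUnit_det _).mp hBmpd.isUnit
    have hSpd : (S i).PosDef := by rw [hSi]; exact hBmpd.inv
    have hSsym : (S i)ᵀ = S i := by
      rw [hSi, Matrix.transpose_nonsing_inv]
      congr 1
      exact hBmpd.isHermitian
    set u : Fin p → ℝ := (S i).mulVec x with hu
    set t : ℝ := x ⬝ᵥ u with ht
    set r : ℝ := u ⬝ᵥ u with hr
    have ht0 : 0 ≤ t := by
      have := hSpd.posSemidef.dotProduct_mulVec_nonneg x
      rwa [star_trivial] at this
    set c : ℝ := 1 + (1/(n:ℝ)) * t with hc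
    have hn' : (0:ℝ) < (n:ℝ) := by exact_mod_cast hn
    have hc0 : 0 < c := by
      rw [hc]
      have h01 : 0 ≤ (1/(n:ℝ)) * t := mul_nonneg (by positivity) ht0
      linarith
    have hcne : c ≠ 0 := hc0.ne'
    -- B *ᵥ u = c • x
    have hBmu : Bm *ᵥ u = x := by
      rw [hu, hSi, Matrix.mulVec_mulVec, Matrix.mul_nonsing_inv _ hBmdet, Matrix.one_mulVec]
    have hBsplit : B = Bm + ((1:ℝ)/n) • Matrix.vecMulVec x x := by
      rw [hBm, hBdef]; abel
    have hBU : B *ᵥ u = c • x := by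
      rw [hBsplit, Matrix.add_mulVec, hBmu, Matrix.smul_mulVec, vmv_mulVec, ← ht,
        smul_smul, hc, add_smul, one_smul]
    have hw : B⁻¹ *ᵥ x = c⁻¹ • u := by
      have h1 : B⁻¹ *ᵥ (B *ᵥ u) = u := by
        rw [Matrix.mulVec_mulVec, hBB', Matrix.one_mulVec]
      rw [hBU, Matrix.mulVec_smul] at h1
      rw [← h1, smul_smul, inv_mul_cancel₀ hcne, one_smul]
    have hvm : x ᵥ* B⁻¹ = c⁻¹ • u := by
      rw [← Matrix.mulVec_transpose, hBsym, hw]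
    -- entries
    have E1 : (X * B⁻¹ * Xᵀ) i i = c⁻¹ * t := by
      rw [sandwich_apply, ← hx, hw, dotProduct_smul, smul_eq_mul, ← ht]
    have hXtXu : (Xᵀ * X) *ᵥ u = ((n:ℝ) * c) • x - ((n:ℝ)*μ) • u := by
      have h1 : (Xᵀ * X) = (n:ℝ) • B - ((n:ℝ)*μ) • 1 := by
        rw [hBdef, smul_add, smul_smul, mul_one_div, div_self hN, one_smul, smul_smul]
        abel
      rw [h1, Matrix.sub_mulVec, Matrix.smul_mulVec, Matrix.smul_mulVec, hBU,
        Matrix.one_mulVec, smul_smul]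
    have E2 : ((X * B⁻¹ * Xᵀ) * (X * B⁻¹ * Xᵀ)) i i
        = c⁻¹ * (((n:ℝ) * c) * (c⁻¹ * t) - ((n:ℝ) * μ) * (c⁻¹ * r)) := by
      have h1 : (X * B⁻¹ * Xᵀ) * (X * B⁻¹ * Xᵀ) = X * (B⁻¹ * (Xᵀ * X) * B⁻¹) * Xᵀ := by
        simp only [Matrix.mul_assoc]
      rw [h1, sandwich_apply, ← hx, ← Matrix.mulVec_mulVec, ← Matrix.mulVec_mulVec,
        hw, Matrix.mulVec_smul, hXtXu]
      rw [Matrix.dotProduct_mulVec, hvm]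
      rw [smul_sub]
      simp only [dotProduct_smul, smul_dotProduct, dotProduct_sub, smul_eq_mul]
      rw [dotProduct_comm u x, ← ht, ← hr]
      ring
    -- numerator dot product
    have hnum : x ⬝ᵥ (S i - μ • (S i) ^ 2).mulVec x = t - μ * r := by
      rw [Matrix.sub_mulVec, dotProduct_sub, Matrix.smul_mulVec, dotProduct_smul,
        smul_eq_mul, ← ht, sq, ← Matrix.mulVec_mulVec, ← hu]
      have : x ⬝ᵥ (S i) *ᵥ u = r := by
        rw [Matrix.dotProduct_mulVec, ← Matrix.mulVec_transpose, hSsym, ← hu, ← hr]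
      rw [this]
    -- product entry
    have hprod : (A⁻¹ * A⁻¹) i i = μ⁻¹ * μ⁻¹ *
        ((1:ℝ) - (1/(n:ℝ))*((X * B⁻¹ * Xᵀ) i i)
          - ((1/(n:ℝ))*((X * B⁻¹ * Xᵀ) i i)
            - (1/(n:ℝ))*((1/(n:ℝ))*(((X * B⁻¹ * Xᵀ) * (X * B⁻¹ * Xᵀ)) i i)))) := by
      rw [hAinv, smul_mul_assoc, mul_smul_comm, smul_smul, Matrix.smul_apply, smul_eq_mul]
      congr 1
      rw [sub_mul, one_mul, mul_sub, mul_one, smul_mul_assoc, mul_smul_comm, smul_smul]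
      simp [Matrix.sub_apply, Matrix.smul_apply, Matrix.one_apply_eq, smul_eq_mul, mul_assoc]
    rw [hprod, E1, E2, hnum]
    have hcne' : (1 + 1/(n:ℝ) * t) ≠ 0 := by rw [← hc]; exact hcne
    rw [show μ + μ / (n:ℝ) * t = μ * c from by rw [hc]; ring, hc]
    field_simp
    ring
  -- assemble
  rw [sq, Matrix.trace]
  simp only [Matrix.diag_apply]
  rw [Finset.mul_sum, Finset.mul_sum]
  exact Finset.sum_congr rfl fun i _ => by rw [key i]
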